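/- Let E be a topological space equipped with its Borel σ-algebra and U a kernel on E with U 1_E ≤ 1 which is strong Feller (U f is continuous on E for every bounded measurable f : E → ℝ) and topologically irreducible (U 1_D(x) > 0 for every nonempty open set D ⊆ E and every x ∈ E). If B ⊆ E is a nonempty Borel set with U 1_{E∖B}(x) = 0 for every x ∈ B, then U 1_{E∖B}(x) = 0 for every x ∈ E. -/
import Mathlib


open MeasureTheory ProbabilityTheory ENNReal

/-- Let `E` be a topological space with its Borel σ-algebra and `U` a
sub-Markovian kernel on `E` which is strong Feller (`U f` is continuous for every bounded
measurable `f`) and topologically irreducible (`U 1_D(x) > 0` for every nonempty open `D`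
and every `x`). If `B` is a nonempty Borel set with `U 1_{E∖B} = 0` on `B`, then
`U 1_{E∖B} = 0` everywhere. -/
theorem statement6 {E : Type*} [TopologicalSpace E] [MeasurableSpace E] [BorelSpace E]
    (U : Kernel E E)
    (hsub : ∀ x : E, U x Set.univ ≤ 1)
    (hFeller : ∀ f : E → ℝ, Measurable f → (∃ C : ℝ, ∀ x, |f x| ≤ C) →
      Continuous (fun x => ∫ y, f y ∂(U x)))
    (hirr : ∀ D : Set E, IsOpen D → D.Nonempty → ∀ x : E, 0 < U x D)
    (B : Set E) (hB : MeasurableSet B) (hBne : B.Nonempty)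
    (habs : ∀ x ∈ B, U x Bᶜ = 0) :
    ∀ x : E, U x Bᶜ = 0 := by
  have hBc : MeasurableSet Bᶜ := hB.compl
  have hfin : ∀ x : E, U x Bᶜ ≠ ⊤ := fun x =>
    ne_top_of_le_ne_top one_ne_top ((measure_mono (Set.subset_univ _)).trans (hsub x))
  -- continuity of x ↦ (U x Bᶜ).toReal
  have hcont : Continuous (fun x => ((U x) Bᶜ).toReal) := by
    have := hFeller (Bᶜ.indicator fun _ => (1 : ℝ))
      ((measurable_const).indicator hBc)
      ⟨1, fun x => by
        by_cases h : x ∈ Bᶜ <;> simp [Set.indicator, h]⟩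
    convert this using 2 with x
    exact (integral_indicator_one hBc).symm
  -- the zero set
  set Z : Set E := {x | U x Bᶜ = 0} with hZ
  have hZclosed : IsClosed Z := by
    have : Z = (fun x => ((U x) Bᶜ).toReal) ⁻¹' {0} := by
      ext x
      simp only [Set.mem_preimage, Set.mem_singleton_iff, hZ, Set.mem_setOf_eq]
      constructor
      · intro h; simp [h]
      · intro h
        exact (ENNReal.toReal_eq_zero_iff _).mp h |>.resolve_right (hfin x)
    rw [this]
    exact IsClosed.preimage hcont isClosed_singleton
  have hBZ : B ⊆ Z := fun x hx => habs x hx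
  -- Z = univ
  by_contra hne
  push_neg at hne
  obtain ⟨x₀, hx₀⟩ := hne
  have hZcne : Zᶜ.Nonempty := ⟨x₀, hx₀⟩
  obtain ⟨b, hb⟩ := hBne
  have hpos := hirr Zᶜ hZclosed.isOpen_compl hZcne b
  have : U b Zᶜ ≤ U b Bᶜ := measure_mono (Set.compl_subset_compl.mpr hBZ)
  rw [habs b hb] at this
  exact absurd (le_antisymm this bot_le) (ne_of_gt hpos)
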